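/- arXiv:2111.03266 — 2 statements merged into one kernel-verified Lean document; each statement's English description precedes it below -/
import Mathlib

section
/- Let κ be a nonzero real number, a = iκ, and c = −4κ². Then for any complex p₁ with p₁² ≠ −κ², the complex number p₂ = (4κ²p₁ + iκ(p₁² − 3κ²))/(κ² + p₁²) satisfies (p₁² + κ²)(p₂² + κ²) = −2c(p₁p₂ − κ²). -/
theorem stmt_1 (κ : ℝ) (hκ : κ ≠ 0) (a c : ℂ) (ha : a = Complex.I * κ)
    (hc : c = -4 * (κ : ℂ) ^ 2) (p₁ : ℂ) (hp₁ : p₁ ^ 2 ≠ -(κ : ℂ) ^ 2) :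
    (p₁ ^ 2 + (κ : ℂ) ^ 2) *
        (((4 * (κ : ℂ) ^ 2 * p₁ + Complex.I * κ * (p₁ ^ 2 - 3 * (κ : ℂ) ^ 2)) /
            ((κ : ℂ) ^ 2 + p₁ ^ 2)) ^ 2 + (κ : ℂ) ^ 2) =
      -2 * c * (p₁ * ((4 * (κ : ℂ) ^ 2 * p₁ + Complex.I * κ * (p₁ ^ 2 - 3 * (κ : ℂ) ^ 2)) /
            ((κ : ℂ) ^ 2 + p₁ ^ 2)) - (κ : ℂ) ^ 2) := by
  have hne : (κ : ℂ) ^ 2 + p₁ ^ 2 ≠ 0 := by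
    intro h
    apply hp₁
    linear_combination h
  subst hc
  field_simp
  ring_nf
  rw [Complex.I_sq]
  ring
end

section
/- Let N ≥ 1 and suppose complex parameters p_{im} (1 ≤ i ≤ 2N, m = 1,2) satisfy p_{N+l,m} = conj(p_{lm}) for 1 ≤ l ≤ N, with all p_{im} + p_{jn} ≠ 0, and let a = iκ with κ real. Then the 2N×2N matrix M with entries M_{ij} = Σ_{m,n=1}^{2} (1/(p_{im}+p_{jn})) · exp(ξ_{im} + ξ_{jn}), where ξ_{im} = p_{im} x + p_{im}³ t + ξ_{im,0} and ξ_{N+l,m,0} = conj(ξ_{lm,0}), has real determinant for all real x, t. -/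
theorem stmt_4 (N : ℕ) (hN : 1 ≤ N) (κ : ℝ) (a : ℂ) (ha : a = Complex.I * κ)
    (p : (Fin N ⊕ Fin N) → Fin 2 → ℂ) (ξ₀ : (Fin N ⊕ Fin N) → Fin 2 → ℂ)
    (hp : ∀ l m, p (Sum.inr l) m = starRingEnd ℂ (p (Sum.inl l) m))
    (hξ₀ : ∀ l m, ξ₀ (Sum.inr l) m = starRingEnd ℂ (ξ₀ (Sum.inl l) m))
    (hsum : ∀ i j m n, p i m + p j n ≠ 0) (x t : ℝ) :
    ((Matrix.of fun i j : Fin N ⊕ Fin N =>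
        ∑ m : Fin 2, ∑ n : Fin 2,
          (1 / (p i m + p j n)) *
            Complex.exp ((p i m * x + (p i m) ^ 3 * t + ξ₀ i m) +
              (p j n * x + (p j n) ^ 3 * t + ξ₀ j n))).det).im = 0 := by
  set M : Matrix (Fin N ⊕ Fin N) (Fin N ⊕ Fin N) ℂ :=
    Matrix.of fun i j : Fin N ⊕ Fin N =>
      ∑ m : Fin 2, ∑ n : Fin 2,
        (1 / (p i m + p j n)) *
          Complex.exp ((p i m * x + (p i m) ^ 3 * t + ξ₀ i m) +
            (p j n * x + (p j n) ^ 3 * t + ξ₀ j n)) with hM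
  have hps : ∀ i m, p (Sum.swap i) m = starRingEnd ℂ (p i m) := by
    rintro (l | l) m
    · exact hp l m
    · simp [hp l m]
  have hξs : ∀ i m, ξ₀ (Sum.swap i) m = starRingEnd ℂ (ξ₀ i m) := by
    rintro (l | l) m
    · exact hξ₀ l m
    · simp [hξ₀ l m]
  have key : ∀ i j, starRingEnd ℂ (M i j) = M (Sum.swap i) (Sum.swap j) := by
    intro i j
    simp only [hM, Matrix.of_apply, map_sum, map_mul, map_div₀, map_one, map_add,
      ← Complex.exp_conj, map_pow, Complex.conj_ofReal, hps, hξs]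
  suffices h : starRingEnd ℂ M.det = M.det by
    exact (Complex.conj_eq_iff_im.mp h)
  have h1 : starRingEnd ℂ M.det = (M.map (starRingEnd ℂ)).det :=
    (RingHom.map_det (starRingEnd ℂ) M).trans rfl
  have h2 : M.map (starRingEnd ℂ) =
      M.submatrix (Equiv.sumComm (Fin N) (Fin N)) (Equiv.sumComm (Fin N) (Fin N)) := by
    ext i j
    simpa using key i j
  rw [h1, h2, Matrix.det_submatrix_equiv_self]
end
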